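/- Let Γ = (G, σ) be a balanced signed graph on n vertices. Given integers 1 ≤ k₁ < k₂ < n, let F_{k₁}(Γ) and F_{k₂}(Γ) be its k₁-token and k₂-token signed graphs, with Laplacian matrices L_{k₁} and L_{k₂}, and let B⁺ be the (n; k₁, k₂)-binomial matrix. Then there exist diagonal ±1 matrices S_{k₁} (of size C(n,k₁) × C(n,k₁)) and S_{k₂} (of size C(n,k₂) × C(n,k₂)) such that the signed binomial matrix B = S_{k₂} B⁺ S_{k₁} satisfies B L_{k₁} = L_{k₂} B. -/

import Mathlib

open scoped Classical

/-- A signed graph: a simple graph together with a signature assigning a sign `±1`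
(an element of `ℤˣ`) to each pair of vertices (only the values on edges are relevant). -/
structure SignedGraph (V : Type*) where
  G : SimpleGraph V
  sign : V → V → ℤˣ
  sign_symm : ∀ u v, sign u v = sign v u

namespace SignedGraph

variable {V W : Type*}

/-- The sign function, as a function on unordered pairs. -/
def esign (Γ : SignedGraph V) : Sym2 V → ℤˣ :=
  Sym2.lift ⟨Γ.sign, Γ.sign_symm⟩

/-- The sign of a walk: the product of the signs of its edges. -/
def walkSign (Γ : SignedGraph V) {u v : V} (p : Γ.G.Walk u v) : ℤˣ :=
  (p.edges.map Γ.esign).prod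

/-- A signed graph is balanced if every cycle is positive. -/
def Balanced (Γ : SignedGraph V) : Prop :=
  ∀ ⦃u : V⦄ (p : Γ.G.Walk u u), p.IsCycle → Γ.walkSign p = 1

/-- Switching at a vertex subset `U`: reverse the sign of every edge with exactly one
endpoint in `U`. -/
noncomputable def switch (Γ : SignedGraph V) (U : Set V) : SignedGraph V where
  G := Γ.G
  sign u v := (if u ∈ U then (-1 : ℤˣ) else 1) * (if v ∈ U then (-1 : ℤˣ) else 1) * Γ.sign u v
  sign_symm u v := by
    try dsimp only
    rw [Γ.sign_symm u v, mul_comm (if u ∈ U then (-1 : ℤˣ) else 1) (if v ∈ U then (-1 : ℤˣ) else 1)]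

/-- Two signed graphs on the same vertex set are "the same signed graph" when they have the
same underlying graph and the same signature on every edge. -/
def SEq (Γ Γ' : SignedGraph V) : Prop :=
  Γ.G = Γ'.G ∧ ∀ u v, Γ.G.Adj u v → Γ.sign u v = Γ'.sign u v

/-- Switching equivalence of two signed graphs on the same vertex set. -/
def SwitchEquiv (Γ Γ' : SignedGraph V) : Prop :=
  ∃ U : Set V, (Γ.switch U).SEq Γ'

/-- A sign-preserving isomorphism of signed graphs. -/
structure Iso (Γ : SignedGraph V) (Γ' : SignedGraph W) where
  toEquiv : V ≃ W
  adj_iff : ∀ u v, Γ.G.Adj u v ↔ Γ'.G.Adj (toEquiv u) (toEquiv v)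
  sign_eq : ∀ u v, Γ.G.Adj u v → Γ.sign u v = Γ'.sign (toEquiv u) (toEquiv v)

/-- Switching isomorphism: `Γ'` is isomorphic to a switching of `Γ`. -/
def SwitchIso (Γ : SignedGraph V) (Γ' : SignedGraph W) : Prop :=
  ∃ U : Set V, Nonempty ((Γ.switch U).Iso Γ')

/-- The negation of a signed graph: all edge signs reversed. -/
def neg (Γ : SignedGraph V) : SignedGraph V where
  G := Γ.G
  sign u v := -Γ.sign u v
  sign_symm u v := by (try dsimp only); rw [Γ.sign_symm]

variable [DecidableEq V]

/-- The underlying graph of the `k`-token graph: vertices are the `k`-subsets of `V`,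
with `A ~ B` when `A Δ B = {a, b}`, `a ∈ A`, `b ∈ B` and `a ~ b` in `G`. -/
def tokenAdj (G : SimpleGraph V) (k : ℕ) : SimpleGraph {A : Finset V // A.card = k} where
  Adj A B := ∃ a b, a ∈ A.1 ∧ b ∈ B.1 ∧ G.Adj a b ∧ symmDiff A.1 B.1 = {a, b}
  symm := by
    refine ⟨?_⟩
    rintro A B ⟨a, b, ha, hb, hab, hs⟩
    exact ⟨b, a, hb, ha, hab.symm, by rw [symmDiff_comm, hs, Finset.pair_comm]⟩
  loopless := by
    refine ⟨?_⟩
    rintro A ⟨a, b, ha, hb, hab, hs⟩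
    rw [symmDiff_self] at hs
    have h : a ∈ ({a, b} : Finset V) := Finset.mem_insert_self a {b}
    rw [← hs] at h
    simp at h

/-- The `k`-token signed graph: the edge obtained by moving a token along `ab`
carries the sign of `ab`. -/
def token (Γ : SignedGraph V) (k : ℕ) : SignedGraph {A : Finset V // A.card = k} where
  G := tokenAdj Γ.G k
  sign A B := ∏ a ∈ A.1 \ B.1, ∏ b ∈ B.1 \ A.1, Γ.sign a b
  sign_symm A B := by
    try dsimp only
    rw [Finset.prod_comm]
    exact Finset.prod_congr rfl fun b _ => Finset.prod_congr rfl fun a _ => Γ.sign_symm a b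

/-- The signed adjacency matrix (over `ℝ`). -/
noncomputable def adjMatrix (Γ : SignedGraph V) [Fintype V] : Matrix V V ℝ :=
  Matrix.of fun u v => if Γ.G.Adj u v then ((Γ.sign u v : ℤ) : ℝ) else 0

/-- The signed Laplacian matrix `L = D - A` (over `ℝ`). -/
noncomputable def lapMatrix (Γ : SignedGraph V) [Fintype V] : Matrix V V ℝ :=
  Matrix.diagonal (fun v => (Γ.G.degree v : ℝ)) - Γ.adjMatrix

/-- The quantity `ℓ_m(Γ)`. -/
noncomputable def ellm (Γ : SignedGraph V) [Fintype V] (m : ℕ) : ℝ :=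
  (∑ r ∈ Finset.range (m + 1),
      ((Γ.G.adjMatrix ℝ ^ r).trace - (Γ.adjMatrix ^ r).trace)) /
  (∑ r ∈ Finset.range (m + 1),
      ((Γ.G.adjMatrix ℝ ^ r).trace + |(Γ.adjMatrix ^ r).trace|))

/-- The unbalance level `ℓ(Γ) = max {ℓ_{n-1}(Γ), ℓ_n(Γ)}`. -/
noncomputable def unbalanceLevel (Γ : SignedGraph V) [Fintype V] : ℝ :=
  max (Γ.ellm (Fintype.card V - 1)) (Γ.ellm (Fintype.card V))

/-- The frustration index: the minimum number of negative edges whose deletion yields a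
balanced signed graph. -/
noncomputable def frustrationIndex (Γ : SignedGraph V) : ℕ :=
  sInf {m : ℕ | ∃ F : Finset (Sym2 V), F.card = m ∧ ↑F ⊆ Γ.G.edgeSet ∧
    (∀ e ∈ F, Γ.esign e = -1) ∧
    Balanced ⟨Γ.G.deleteEdges ↑F, Γ.sign, Γ.sign_symm⟩}

/-- The signed complement of a balanced signed graph, with respect to a switching function
`s` witnessing balance (`A_σ = S A S`): the signed graph on the complement graph with
adjacency matrix `S Ā S`, i.e. with sign `s u * s v` on each complement edge. -/
def scompl (Γ : SignedGraph V) (s : V → ℤˣ) : SignedGraph V where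
  G := Γ.Gᶜ
  sign u v := s u * s v
  sign_symm u v := mul_comm _ _

/-- The real diagonal `±1` matrix associated with `s : V → ℤˣ`. -/
noncomputable def diagS [Fintype V] (s : V → ℤˣ) : Matrix V V ℝ :=
  Matrix.diagonal fun v => ((s v : ℤ) : ℝ)

end SignedGraph

/-- The all-positive signed complete graph on `V`. -/
def allPos (V : Type*) : SignedGraph V := ⟨⊤, fun _ _ => 1, fun _ _ => rfl⟩

/-- The `(n; 1, k)`-binomial matrix. -/
noncomputable def binomB (V : Type*) [Fintype V] [DecidableEq V] (k : ℕ) :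
    Matrix {A : Finset V // A.card = k} V ℝ :=
  Matrix.of fun A v => if v ∈ A.1 then 1 else 0

/-- The `(n; k₁, k₂)`-binomial matrix. -/
noncomputable def binomB2 (V : Type*) [Fintype V] [DecidableEq V] (k₁ k₂ : ℕ) :
    Matrix {A : Finset V // A.card = k₂} {A : Finset V // A.card = k₁} ℝ :=
  Matrix.of fun A X => if X.1 ⊆ A.1 then 1 else 0


namespace SignedGraph

section WalkAux

variable {V : Type*} {Γ : SignedGraph V}

lemma units_self_inv (u : ℤˣ) : u⁻¹ = u := (inv_eq_of_mul_eq_one_right (Int.units_mul_self u))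

lemma esign_mk (u v : V) : Γ.esign s(u, v) = Γ.sign u v := rfl

lemma walkSign_nil {u : V} : Γ.walkSign (SimpleGraph.Walk.nil : Γ.G.Walk u u) = 1 := rfl

lemma walkSign_cons {u v w : V} (h : Γ.G.Adj u v) (p : Γ.G.Walk v w) :
    Γ.walkSign (SimpleGraph.Walk.cons h p) = Γ.sign u v * Γ.walkSign p := by
  simp [walkSign, SimpleGraph.Walk.edges_cons, esign_mk]

lemma walkSign_append {u v w : V} (p : Γ.G.Walk u v) (q : Γ.G.Walk v w) :
    Γ.walkSign (p.append q) = Γ.walkSign p * Γ.walkSign q := by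
  simp [walkSign, SimpleGraph.Walk.edges_append]

lemma walkSign_reverse {u v : V} (p : Γ.G.Walk u v) :
    Γ.walkSign p.reverse = Γ.walkSign p := by
  simp [walkSign, SimpleGraph.Walk.edges_reverse, List.prod_reverse]

lemma walkSign_copy {u v u' v' : V} (p : Γ.G.Walk u v) (hu : u = u') (hv : v = v') :
    Γ.walkSign (p.copy hu hv) = Γ.walkSign p := by
  simp [walkSign, SimpleGraph.Walk.edges_copy]

lemma exists_cons_of_mem_edges {G : SimpleGraph V} {u v w : V} (q : G.Walk u v)
    (hu : u ∉ q.support.tail) (he : s(u, w) ∈ q.edges) :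
    ∃ (h : G.Adj u w) (q' : G.Walk w v), q = SimpleGraph.Walk.cons h q' := by
  cases q with
  | nil => simp at he
  | cons h q' =>
    rename_i x
    rw [SimpleGraph.Walk.edges_cons, List.mem_cons] at he
    rcases he with he | he
    · have hwx : w = x := by
        rw [Sym2.congr_right] at he
        first | exact he | exact he.symm
      subst hwx
      exact ⟨h, q', rfl⟩
    · exfalso
      apply hu
      have := SimpleGraph.Walk.fst_mem_support_of_mem_edges q' he
      simpa using this

lemma walkSign_closed_aux (hbal : Γ.Balanced) :
    ∀ n : ℕ, ∀ {u : V} (p : Γ.G.Walk u u), p.length ≤ n → Γ.walkSign p = 1 := by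
  intro n
  induction n with
  | zero =>
    intro u p hp
    have : p.length = 0 := Nat.le_zero.mp hp
    cases p with
    | nil => rfl
    | cons h q => simp at this
  | succ n ih =>
    intro u p hp
    by_cases hnd : p.support.tail.Nodup
    · cases p with
      | nil => rfl
      | cons h q =>
        rename_i v
        -- h : Γ.G.Adj u v, q : Walk v u
        have hq_supp : (SimpleGraph.Walk.cons h q).support.tail = q.support := by
          simp [SimpleGraph.Walk.support_cons]
        rw [hq_supp] at hnd
        by_cases he : s(u, v) ∈ q.edges
        · -- q starts with the edge v-u
          have hv_not : v ∉ q.support.tail := by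
            have := q.support_eq_cons
            rw [this] at hnd
            exact (List.nodup_cons.mp hnd).1
          have he' : s(v, u) ∈ q.edges := by rwa [Sym2.eq_swap]
          obtain ⟨h', q'', rfl⟩ := exists_cons_of_mem_edges q hv_not he'
          rw [walkSign_cons, walkSign_cons]
          have hq'' : Γ.walkSign q'' = 1 := by
            apply ih
            simp only [SimpleGraph.Walk.length_cons] at hp
            omega
          rw [hq'', mul_one, Γ.sign_symm v u, Int.units_mul_self]
        · -- cycle case
          have hcyc : (SimpleGraph.Walk.cons h q).IsCycle := by
            rw [SimpleGraph.Walk.cons_isCycle_iff]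
            exact ⟨SimpleGraph.Walk.isPath_def _ |>.mpr hnd, he⟩
          exact hbal _ hcyc
    · -- there is a repeated vertex: rotate and split
      obtain ⟨w, hw⟩ := List.exists_duplicate_iff_not_nodup.mpr hnd
      have hw2 : 2 ≤ p.support.tail.count w := List.duplicate_iff_two_le_count.mp hw
      have hwmem : w ∈ p.support := List.mem_of_mem_tail hw.mem
      have hrot := p.support_rotate w hwmem
      have hcount : 2 ≤ (p.rotate w hwmem).support.tail.count w := by
        rw [hrot.perm.count_eq]; exact hw2
      have hlen : (p.rotate w hwmem).length = p.length := by
        have := (p.rotate_edges w hwmem).perm.length_eq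
        simpa [SimpleGraph.Walk.length_edges] using this
      have hsign : Γ.walkSign (p.rotate w hwmem) = Γ.walkSign p :=
        ((p.rotate_edges w hwmem).perm.map Γ.esign).prod_eq
      rw [← hsign]
      clear hsign hrot hw hw2 hnd
      -- now analyze the rotated walk
      generalize p.rotate w hwmem = p' at hcount hlen ⊢
      cases p' with
      | nil => simp at hcount
      | cons h' q' =>
        rename_i x
        -- h' : Adj w x, q' : Walk x w
        have hsupp : (SimpleGraph.Walk.cons h' q').support.tail = q'.support := by
          simp [SimpleGraph.Walk.support_cons]
        rw [hsupp] at hcount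
        have hwq' : w ∈ q'.support := List.count_pos_iff.mp (by omega) -- might need mem iff
        have hspec := q'.take_spec hwq'
        have hcount2 : 1 ≤ (q'.dropUntil w hwq').support.tail.count w := by
          have hsplit : q'.support = (q'.takeUntil w hwq').support ++ (q'.dropUntil w hwq').support.tail := by
            have h0 := congrArg SimpleGraph.Walk.support hspec
            rw [SimpleGraph.Walk.support_append] at h0
            exact h0.symm
          rw [hsplit, List.count_append, q'.count_support_takeUntil_eq_one hwq'] at hcount
          omega
        have hdrop_len : 1 ≤ (q'.dropUntil w hwq').length := by
          have hne : (q'.dropUntil w hwq').support.tail ≠ [] := by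
            intro hnil
            rw [hnil] at hcount2
            simp at hcount2
          have hlen2 : (q'.dropUntil w hwq').support.length = (q'.dropUntil w hwq').length + 1 :=
            SimpleGraph.Walk.length_support _
          have : (q'.dropUntil w hwq').support.tail.length
              = (q'.dropUntil w hwq').length := by
            rw [List.length_tail, hlen2]
            omega
          have hpos : 0 < (q'.dropUntil w hwq').support.tail.length :=
            List.length_pos_iff.mpr hne
          omega
        have hlq : (q'.takeUntil w hwq').length + (q'.dropUntil w hwq').length = q'.length := by
          conv_rhs => rw [← hspec]
          rw [SimpleGraph.Walk.length_append]
        have hq'len : q'.length ≤ n := by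
          simp only [SimpleGraph.Walk.length_cons] at hlen
          omega
        have h1 : Γ.walkSign (SimpleGraph.Walk.cons h' (q'.takeUntil w hwq')) = 1 := by
          apply ih
          rw [SimpleGraph.Walk.length_cons]
          omega
        have h2 : Γ.walkSign (q'.dropUntil w hwq') = 1 := by
          apply ih
          omega
        calc Γ.walkSign (SimpleGraph.Walk.cons h' q')
            = Γ.walkSign (SimpleGraph.Walk.cons h' ((q'.takeUntil w hwq').append (q'.dropUntil w hwq'))) := by rw [hspec]
          _ = Γ.sign w x * (Γ.walkSign (q'.takeUntil w hwq') * Γ.walkSign (q'.dropUntil w hwq')) := by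
              rw [walkSign_cons, walkSign_append]
          _ = Γ.walkSign (SimpleGraph.Walk.cons h' (q'.takeUntil w hwq')) * Γ.walkSign (q'.dropUntil w hwq') := by
              rw [walkSign_cons, mul_assoc]
          _ = 1 := by rw [h1, h2, mul_one]

lemma walkSign_closed (hbal : Γ.Balanced) {u : V} (p : Γ.G.Walk u u) : Γ.walkSign p = 1 :=
  walkSign_closed_aux hbal p.length p le_rfl

lemma exists_switch (hbal : Γ.Balanced) :
    ∃ s : V → ℤˣ, ∀ u v, Γ.G.Adj u v → Γ.sign u v = s u * s v := by
  classical
  have hreach : ∀ v : V, Γ.G.Reachable ((Γ.G.connectedComponentMk v).out) v := by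
    intro v
    apply SimpleGraph.ConnectedComponent.exact
    exact (Γ.G.connectedComponentMk v).out_eq
  refine ⟨fun v => Γ.walkSign (hreach v).some, ?_⟩
  intro u v h
  have hc : Γ.G.connectedComponentMk v = Γ.G.connectedComponentMk u :=
    (SimpleGraph.ConnectedComponent.connectedComponentMk_eq_of_adj h).symm
  have hr : (Γ.G.connectedComponentMk v).out = (Γ.G.connectedComponentMk u).out := by rw [hc]
  set p := (hreach u).some with hp
  set q := (hreach v).some with hq
  have hclosed : Γ.walkSign (((p.append (SimpleGraph.Walk.cons h q.reverse)).copy rfl hr)) = 1 :=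
    walkSign_closed hbal _
  rw [walkSign_copy, walkSign_append, walkSign_cons, walkSign_reverse] at hclosed
  -- hclosed : walkSign p * (sign u v * walkSign q) = 1
  have h1 : (Γ.walkSign p)⁻¹ = Γ.sign u v * Γ.walkSign q :=
    inv_eq_of_mul_eq_one_right hclosed
  rw [units_self_inv] at h1
  -- walkSign p = sign u v * walkSign q
  have h2 : Γ.walkSign p * Γ.walkSign q = Γ.sign u v * (Γ.walkSign q * Γ.walkSign q) := by
    rw [h1, mul_assoc]
  rw [Int.units_mul_self, mul_one] at h2
  exact h2.symm

end WalkAux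

section TokenAux

open Finset

variable {V : Type*} [DecidableEq V]

lemma tokenAdj_struct {G : SimpleGraph V} {k : ℕ} {P Q : {A : Finset V // A.card = k}} :
    (tokenAdj G k).Adj P Q ↔
      ∃ a b, G.Adj a b ∧ a ∈ P.1 ∧ a ∉ Q.1 ∧ b ∈ Q.1 ∧ b ∉ P.1 ∧
        symmDiff P.1 Q.1 = {a, b} := by
  constructor
  · rintro ⟨a, b, ha, hb, hab, hs⟩
    refine ⟨a, b, hab, ha, ?_, hb, ?_, hs⟩
    · intro haQ
      have : a ∈ symmDiff P.1 Q.1 := by rw [hs]; exact mem_insert_self a {b}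
      rw [Finset.mem_symmDiff] at this
      tauto
    · intro hbP
      have : b ∈ symmDiff P.1 Q.1 := by rw [hs]; exact mem_insert_of_mem (mem_singleton_self b)
      rw [Finset.mem_symmDiff] at this
      tauto
  · rintro ⟨a, b, hab, ha, _, hb, _, hs⟩
    exact ⟨a, b, ha, hb, hab, hs⟩

lemma symmDiff_pair {s : Finset V} {x y : V} (hx : x ∈ s) (hy : y ∉ s) (hxy : x ≠ y) :
    symmDiff s {x, y} = insert y (s.erase x) := by
  ext z
  rw [Finset.mem_symmDiff]
  simp only [mem_insert, mem_singleton, mem_erase]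
  by_cases hzx : z = x <;> by_cases hzy : z = y <;> subst_eqs <;> tauto

lemma card_symmDiff_pair {s : Finset V} {x y : V} (hx : x ∈ s) (hy : y ∉ s) (hxy : x ≠ y) :
    (symmDiff s {x, y}).card = s.card := by
  rw [symmDiff_pair hx hy hxy, card_insert_of_notMem, card_erase_of_mem hx]
  · have : 0 < s.card := card_pos.mpr ⟨x, hx⟩
    omega
  · simp only [mem_erase, not_and]
    intro _
    exact hy

lemma mem_symmDiff_pair_left {s : Finset V} {x y : V} (hx : x ∈ s) (hy : y ∉ s) (hxy : x ≠ y) :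
    x ∉ symmDiff s {x, y} := by
  rw [symmDiff_pair hx hy hxy]
  simp only [mem_insert, mem_erase]
  push_neg
  exact ⟨hxy, fun h _ => (h rfl).elim⟩

lemma mem_symmDiff_pair_right {s : Finset V} {x y : V} (hx : x ∈ s) (hy : y ∉ s) (hxy : x ≠ y) :
    y ∈ symmDiff s {x, y} := by
  rw [symmDiff_pair hx hy hxy]
  exact mem_insert_self _ _

variable [Fintype V]

/-- Case `X ⊆ A` bijection. -/
lemma card_case1 {G : SimpleGraph V} {k₁ k₂ : ℕ}
    (A : {A : Finset V // A.card = k₂}) (X : {A : Finset V // A.card = k₁})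
    (hXA : X.1 ⊆ A.1) :
    (Finset.univ.filter fun Y : {A : Finset V // A.card = k₁} =>
        (tokenAdj G k₁).Adj X Y ∧ ¬ Y.1 ⊆ A.1).card =
    (Finset.univ.filter fun B : {A : Finset V // A.card = k₂} =>
        (tokenAdj G k₂).Adj A B ∧ ¬ X.1 ⊆ B.1).card := by
  have key1 : ∀ Y : {A : Finset V // A.card = k₁},
      (tokenAdj G k₁).Adj X Y → ¬ Y.1 ⊆ A.1 →
      ∃ a b, G.Adj a b ∧ a ∈ X.1 ∧ a ∈ A.1 ∧ a ∉ Y.1 ∧ b ∈ Y.1 ∧ b ∉ X.1 ∧ b ∉ A.1 ∧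
        symmDiff X.1 Y.1 = {a, b} := by
    intro Y hadj hns
    rw [tokenAdj_struct] at hadj
    obtain ⟨a, b, hab, haX, haY, hbY, hbX, hs⟩ := hadj
    rw [Finset.not_subset] at hns
    obtain ⟨z, hzY, hzA⟩ := hns
    have hzX : z ∉ X.1 := fun h => hzA (hXA h)
    have hzs : z ∈ symmDiff X.1 Y.1 := Finset.mem_symmDiff.mpr (Or.inr ⟨hzY, hzX⟩)
    rw [hs] at hzs
    simp only [mem_insert, mem_singleton] at hzs
    have hzb : z = b := by
      rcases hzs with h | h
      · exact absurd (h ▸ hzY) haY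
      · exact h
    subst hzb
    exact ⟨a, z, hab, haX, hXA haX, haY, hzY, hzX, hzA, hs⟩
  have key2 : ∀ B : {A : Finset V // A.card = k₂},
      (tokenAdj G k₂).Adj A B → ¬ X.1 ⊆ B.1 →
      ∃ a b, G.Adj a b ∧ a ∈ X.1 ∧ a ∈ A.1 ∧ a ∉ B.1 ∧ b ∈ B.1 ∧ b ∉ X.1 ∧ b ∉ A.1 ∧
        symmDiff A.1 B.1 = {a, b} := by
    intro B hadj hns
    rw [tokenAdj_struct] at hadj
    obtain ⟨a, b, hab, haA, haB, hbB, hbA, hs⟩ := hadj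
    rw [Finset.not_subset] at hns
    obtain ⟨z, hzX, hzB⟩ := hns
    have hzs : z ∈ symmDiff A.1 B.1 := Finset.mem_symmDiff.mpr (Or.inl ⟨hXA hzX, hzB⟩)
    rw [hs] at hzs
    simp only [mem_insert, mem_singleton] at hzs
    have hza : z = a := by
      rcases hzs with h | h
      · exact h
      · exact absurd (h ▸ hXA hzX) hbA
    subst hza
    have hbX : b ∉ X.1 := fun h => hbA (hXA h)
    exact ⟨z, b, hab, hzX, hXA hzX, haB, hbB, hbX, hbA, hs⟩
  refine Finset.card_bij'
    (i := fun Y _ => (⟨symmDiff A.1 (symmDiff X.1 Y.1), by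
      have hY' := by exact Finset.mem_filter.mp ‹Y ∈ _›
      obtain ⟨a, b, hab, haX, haA, haY, hbY, hbX, hbA, hs⟩ := key1 Y hY'.2.1 hY'.2.2
      rw [hs, card_symmDiff_pair haA hbA hab.ne, A.2]⟩ : {A : Finset V // A.card = k₂}))
    (j := fun B _ => (⟨symmDiff X.1 (symmDiff A.1 B.1), by
      have hB' := by exact Finset.mem_filter.mp ‹B ∈ _›
      obtain ⟨a, b, hab, haX, haA, haB, hbB, hbX, hbA, hs⟩ := key2 B hB'.2.1 hB'.2.2
      rw [hs, card_symmDiff_pair haX hbX hab.ne, X.2]⟩ : {A : Finset V // A.card = k₁}))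
    ?_ ?_ ?_ ?_
  · intro Y hY
    rw [Finset.mem_filter] at hY ⊢
    obtain ⟨a, b, hab, haX, haA, haY, hbY, hbX, hbA, hs⟩ := key1 Y hY.2.1 hY.2.2
    refine ⟨mem_univ _, ?_, ?_⟩
    · rw [tokenAdj_struct]
      refine ⟨a, b, hab, haA, ?_, ?_, hbA, ?_⟩
      · simp only [hs]
        exact mem_symmDiff_pair_left haA hbA hab.ne
      · simp only [hs]
        exact mem_symmDiff_pair_right haA hbA hab.ne
      · simp only [hs]
        simp only [symmDiff_symmDiff_cancel_left]
    · rw [Finset.not_subset]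
      refine ⟨a, haX, ?_⟩
      simp only [hs]
      exact mem_symmDiff_pair_left haA hbA hab.ne
  · intro B hB
    rw [Finset.mem_filter] at hB ⊢
    obtain ⟨a, b, hab, haX, haA, haB, hbB, hbX, hbA, hs⟩ := key2 B hB.2.1 hB.2.2
    refine ⟨mem_univ _, ?_, ?_⟩
    · rw [tokenAdj_struct]
      refine ⟨a, b, hab, haX, ?_, ?_, hbX, ?_⟩
      · simp only [hs]
        exact mem_symmDiff_pair_left haX hbX hab.ne
      · simp only [hs]
        exact mem_symmDiff_pair_right haX hbX hab.ne
      · simp only [hs]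
        simp only [symmDiff_symmDiff_cancel_left]
    · rw [Finset.not_subset]
      refine ⟨b, ?_, hbA⟩
      simp only [hs]
      exact mem_symmDiff_pair_right haX hbX hab.ne
  · intro Y hY
    apply Subtype.ext
    simp only [symmDiff_symmDiff_cancel_left]
  · intro B hB
    apply Subtype.ext
    simp only [symmDiff_symmDiff_cancel_left]

lemma mem_symmDiff_pair_other {s : Finset V} {x y z : V} (hx : x ∈ s) (hy : y ∉ s)
    (hxy : x ≠ y) (hzx : z ≠ x) (hzy : z ≠ y) : z ∈ symmDiff s {x, y} ↔ z ∈ s := by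
  rw [symmDiff_pair hx hy hxy]
  simp [hzx, hzy]

/-- Case `¬ X ⊆ A` bijection. -/
lemma card_case2 {G : SimpleGraph V} {k₁ k₂ : ℕ}
    (A : {A : Finset V // A.card = k₂}) (X : {A : Finset V // A.card = k₁})
    (hXA : ¬ X.1 ⊆ A.1) :
    (Finset.univ.filter fun Y : {A : Finset V // A.card = k₁} =>
        (tokenAdj G k₁).Adj X Y ∧ Y.1 ⊆ A.1).card =
    (Finset.univ.filter fun B : {A : Finset V // A.card = k₂} =>
        (tokenAdj G k₂).Adj A B ∧ X.1 ⊆ B.1).card := by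
  obtain ⟨z₀, hz₀X, hz₀A⟩ := Finset.not_subset.mp hXA
  have key1 : ∀ Y : {A : Finset V // A.card = k₁},
      (tokenAdj G k₁).Adj X Y → Y.1 ⊆ A.1 →
      ∃ a b, G.Adj a b ∧ a ∈ X.1 ∧ a ∉ A.1 ∧ a ∉ Y.1 ∧ b ∈ Y.1 ∧ b ∈ A.1 ∧ b ∉ X.1 ∧
        symmDiff X.1 Y.1 = {a, b} ∧ (∀ z ∈ X.1, z ∉ A.1 → z = a) := by
    intro Y hadj hYA
    rw [tokenAdj_struct] at hadj
    obtain ⟨a, b, hab, haX, haY, hbY, hbX, hs⟩ := hadj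
    have hkey : ∀ z ∈ X.1, z ∉ A.1 → z = a := by
      intro z hzX hzA
      have hzY : z ∉ Y.1 := fun h => hzA (hYA h)
      have hzs : z ∈ symmDiff X.1 Y.1 := Finset.mem_symmDiff.mpr (Or.inl ⟨hzX, hzY⟩)
      rw [hs] at hzs
      simp only [mem_insert, mem_singleton] at hzs
      rcases hzs with h | h
      · exact h
      · exact absurd (h ▸ hzY) (fun hc => hc hbY)
    have haA : a ∉ A.1 := by
      have := hkey z₀ hz₀X hz₀A
      rw [← this]; exact hz₀A
    exact ⟨a, b, hab, haX, haA, haY, hbY, hYA hbY, hbX, hs, hkey⟩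
  have key2 : ∀ B : {A : Finset V // A.card = k₂},
      (tokenAdj G k₂).Adj A B → X.1 ⊆ B.1 →
      ∃ a b, G.Adj a b ∧ a ∈ A.1 ∧ a ∉ X.1 ∧ a ∉ B.1 ∧ b ∈ B.1 ∧ b ∈ X.1 ∧ b ∉ A.1 ∧
        symmDiff A.1 B.1 = {a, b} ∧ (∀ z ∈ X.1, z ∉ A.1 → z = b) := by
    intro B hadj hXB
    rw [tokenAdj_struct] at hadj
    obtain ⟨a, b, hab, haA, haB, hbB, hbA, hs⟩ := hadj
    have hkey : ∀ z ∈ X.1, z ∉ A.1 → z = b := by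
      intro z hzX hzA
      have hzs : z ∈ symmDiff A.1 B.1 := Finset.mem_symmDiff.mpr (Or.inr ⟨hXB hzX, hzA⟩)
      rw [hs] at hzs
      simp only [mem_insert, mem_singleton] at hzs
      rcases hzs with h | h
      · exact absurd (h ▸ hzA) (fun hc => hc haA)
      · exact h
    have hbX : b ∈ X.1 := by
      have := hkey z₀ hz₀X hz₀A
      rw [← this]; exact hz₀X
    have haX : a ∉ X.1 := fun h => haB (hXB h)
    exact ⟨a, b, hab, haA, haX, haB, hbB, hbX, hbA, hs, hkey⟩
  refine Finset.card_bij'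
    (i := fun Y _ => (⟨symmDiff A.1 (symmDiff X.1 Y.1), by
      have hY' := by exact Finset.mem_filter.mp ‹Y ∈ _›
      obtain ⟨a, b, hab, haX, haA, haY, hbY, hbA, hbX, hs, hkey⟩ := key1 Y hY'.2.1 hY'.2.2
      rw [hs, Finset.pair_comm, card_symmDiff_pair hbA haA hab.ne.symm, A.2]⟩ :
        {A : Finset V // A.card = k₂}))
    (j := fun B _ => (⟨symmDiff X.1 (symmDiff A.1 B.1), by
      have hB' := by exact Finset.mem_filter.mp ‹B ∈ _›
      obtain ⟨a, b, hab, haA, haX, haB, hbB, hbX, hbA, hs, hkey⟩ := key2 B hB'.2.1 hB'.2.2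
      rw [hs, Finset.pair_comm, card_symmDiff_pair hbX haX hab.ne.symm, X.2]⟩ :
        {A : Finset V // A.card = k₁}))
    ?_ ?_ ?_ ?_
  · intro Y hY
    rw [Finset.mem_filter] at hY ⊢
    obtain ⟨a, b, hab, haX, haA, haY, hbY, hbA, hbX, hs, hkey⟩ := key1 Y hY.2.1 hY.2.2
    refine ⟨mem_univ _, ?_, ?_⟩
    · rw [tokenAdj_struct]
      refine ⟨b, a, hab.symm, hbA, ?_, ?_, haA, ?_⟩
      · simp only [hs, Finset.pair_comm a b]
        exact mem_symmDiff_pair_left hbA haA hab.ne.symm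
      · simp only [hs, Finset.pair_comm a b]
        exact mem_symmDiff_pair_right hbA haA hab.ne.symm
      · simp only [hs, Finset.pair_comm a b]
        simp only [symmDiff_symmDiff_cancel_left]
    · intro z hzX
      simp only [hs, Finset.pair_comm a b]
      by_cases hza : z = a
      · subst hza
        exact mem_symmDiff_pair_right hbA haA hab.ne.symm
      · have hzA : z ∈ A.1 := by
          by_contra hc
          exact hza (hkey z hzX hc)
        have hzb : z ≠ b := fun h => hbX (h ▸ hzX)
        exact (mem_symmDiff_pair_other hbA haA hab.ne.symm hzb hza).mpr hzA
  · intro B hB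
    rw [Finset.mem_filter] at hB ⊢
    obtain ⟨a, b, hab, haA, haX, haB, hbB, hbX, hbA, hs, hkey⟩ := key2 B hB.2.1 hB.2.2
    refine ⟨mem_univ _, ?_, ?_⟩
    · rw [tokenAdj_struct]
      refine ⟨b, a, hab.symm, hbX, ?_, ?_, haX, ?_⟩
      · simp only [hs, Finset.pair_comm a b]
        exact mem_symmDiff_pair_left hbX haX hab.ne.symm
      · simp only [hs, Finset.pair_comm a b]
        exact mem_symmDiff_pair_right hbX haX hab.ne.symm
      · simp only [hs, Finset.pair_comm a b]
        simp only [symmDiff_symmDiff_cancel_left]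
    · intro z hz
      simp only [hs, Finset.pair_comm a b] at hz
      by_cases hza : z = a
      · subst hza
        exact haA
      · have hzb : z ≠ b := by
          intro h
          subst h
          exact absurd hz (mem_symmDiff_pair_left hbX haX hab.ne.symm)
        have hzX : z ∈ X.1 := (mem_symmDiff_pair_other hbX haX hab.ne.symm hzb hza).mp hz
        by_contra hzA
        exact hzb (hkey z hzX hzA)
  · intro Y hY
    apply Subtype.ext
    simp only [symmDiff_symmDiff_cancel_left]
  · intro B hB
    apply Subtype.ext
    simp only [symmDiff_symmDiff_cancel_left]

lemma card_filter_proof_irrel {α : Type*} (s : Finset α) (p : α → Prop)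
    (h1 h2 : DecidablePred p) :
    (@Finset.filter α p h1 s).card = (@Finset.filter α p h2 s).card := by
  have : h1 = h2 := Subsingleton.elim _ _
  subst this
  rfl

lemma degree_split {α : Type*} [Fintype α] (G' : SimpleGraph α) (x : α) (P : α → Prop) :
    G'.degree x = ((Finset.univ.filter fun y => G'.Adj x y ∧ P y).card
      + (Finset.univ.filter fun y => G'.Adj x y ∧ ¬ P y).card : ℕ) := by
  classical
  have h1 : G'.degree x = (univ.filter fun y => G'.Adj x y).card := by
    rw [← SimpleGraph.neighborFinset_eq_filter]
    rfl
  have h2 := Finset.card_filter_add_card_filter_not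
    (s := univ.filter fun y => G'.Adj x y) (p := P)
  rw [Finset.filter_filter, Finset.filter_filter] at h2
  rw [h1, ← h2]

lemma token_lap_commutes (G : SimpleGraph V) (k₁ k₂ : ℕ) :
    binomB2 V k₁ k₂ * (tokenAdj G k₁).lapMatrix ℝ
      = (tokenAdj G k₂).lapMatrix ℝ * binomB2 V k₁ k₂ := by
  classical
  ext A X
  rw [Matrix.mul_apply, Matrix.mul_apply]
  have e1 : ∀ Y : {A : Finset V // A.card = k₁},
      binomB2 V k₁ k₂ A Y * (tokenAdj G k₁).lapMatrix ℝ Y X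
        = (if Y = X ∧ X.1 ⊆ A.1 then ((tokenAdj G k₁).degree X : ℝ) else 0)
          - (if (tokenAdj G k₁).Adj X Y ∧ Y.1 ⊆ A.1 then 1 else 0) := by
    intro Y
    simp only [binomB2, Matrix.of_apply, SimpleGraph.lapMatrix, SimpleGraph.degMatrix,
      Matrix.sub_apply, Matrix.diagonal_apply, SimpleGraph.adjMatrix_apply]
    by_cases h1 : Y = X
    · subst h1
      by_cases h2 : Y.1 ⊆ A.1 <;> simp [h2]
    · by_cases h2 : Y.1 ⊆ A.1 <;> by_cases h3 : (tokenAdj G k₁).Adj X Y <;>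
        simp [h1, h2, h3, SimpleGraph.adj_comm]
  have e2 : ∀ B : {A : Finset V // A.card = k₂},
      (tokenAdj G k₂).lapMatrix ℝ A B * binomB2 V k₁ k₂ B X
        = (if B = A ∧ X.1 ⊆ A.1 then ((tokenAdj G k₂).degree A : ℝ) else 0)
          - (if (tokenAdj G k₂).Adj A B ∧ X.1 ⊆ B.1 then 1 else 0) := by
    intro B
    simp only [binomB2, Matrix.of_apply, SimpleGraph.lapMatrix, SimpleGraph.degMatrix,
      Matrix.sub_apply, Matrix.diagonal_apply, SimpleGraph.adjMatrix_apply]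
    by_cases h1 : B = A
    · subst h1
      by_cases h2 : X.1 ⊆ B.1 <;> simp [h2]
    · have h1' : ¬ A = B := fun h => h1 h.symm
      by_cases h2 : X.1 ⊆ B.1 <;> by_cases h3 : (tokenAdj G k₂).Adj A B <;>
        simp [h1, h1', h2, h3]
  rw [Finset.sum_congr rfl fun Y _ => e1 Y, Finset.sum_congr rfl fun B _ => e2 B]
  rw [Finset.sum_sub_distrib, Finset.sum_sub_distrib]
  have s1 : (∑ Y : {A : Finset V // A.card = k₁},
      if Y = X ∧ X.1 ⊆ A.1 then ((tokenAdj G k₁).degree X : ℝ) else 0)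
      = if X.1 ⊆ A.1 then ((tokenAdj G k₁).degree X : ℝ) else 0 := by
    by_cases hXA : X.1 ⊆ A.1 <;> simp [hXA]
  have s2 : (∑ B : {A : Finset V // A.card = k₂},
      if B = A ∧ X.1 ⊆ A.1 then ((tokenAdj G k₂).degree A : ℝ) else 0)
      = if X.1 ⊆ A.1 then ((tokenAdj G k₂).degree A : ℝ) else 0 := by
    by_cases hXA : X.1 ⊆ A.1 <;> simp [hXA]
  rw [s1, s2, Finset.sum_boole, Finset.sum_boole]
  by_cases hXA : X.1 ⊆ A.1
  · simp only [hXA, if_true]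
    have d1 : (tokenAdj G k₁).degree X
        = (Finset.univ.filter fun Y : {A : Finset V // A.card = k₁} =>
            (tokenAdj G k₁).Adj X Y ∧ Y.1 ⊆ A.1).card
          + (Finset.univ.filter fun Y : {A : Finset V // A.card = k₁} =>
            (tokenAdj G k₁).Adj X Y ∧ ¬ Y.1 ⊆ A.1).card :=
      (degree_split (tokenAdj G k₁) X (fun Y => Y.1 ⊆ A.1)).trans
        (by congr 1 <;> apply card_filter_proof_irrel)
    have d2 : (tokenAdj G k₂).degree A
        = (Finset.univ.filter fun B : {A : Finset V // A.card = k₂} =>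
            (tokenAdj G k₂).Adj A B ∧ X.1 ⊆ B.1).card
          + (Finset.univ.filter fun B : {A : Finset V // A.card = k₂} =>
            (tokenAdj G k₂).Adj A B ∧ ¬ X.1 ⊆ B.1).card :=
      (degree_split (tokenAdj G k₂) A (fun B => X.1 ⊆ B.1)).trans
        (by congr 1 <;> apply card_filter_proof_irrel)
    have hc := card_case1 (G := G) A X hXA
    rw [d1, d2, hc]
    push_cast
    ring
  · simp only [hXA, if_false]
    have hc := card_case2 (G := G) A X hXA
    rw [hc]

noncomputable def prodSign (s : V → ℤˣ) (k : ℕ) (P : {A : Finset V // A.card = k}) : ℝ :=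
  (((∏ v ∈ P.1, s v : ℤˣ) : ℤ) : ℝ)

lemma prodSign_mul_self (s : V → ℤˣ) (k : ℕ) (P : {A : Finset V // A.card = k}) :
    prodSign s k P * prodSign s k P = 1 := by
  unfold prodSign
  rw [← Int.cast_mul, ← Units.val_mul, Int.units_mul_self, Units.val_one, Int.cast_one]

lemma token_sign_singletons {Γ : SignedGraph V} {k : ℕ}
    {P Q : {A : Finset V // A.card = k}} (h : (tokenAdj Γ.G k).Adj P Q) (s : V → ℤˣ)
    (hs : ∀ u v, Γ.G.Adj u v → Γ.sign u v = s u * s v) :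
    (Γ.token k).sign P Q = (∏ v ∈ P.1, s v) * (∏ v ∈ Q.1, s v) := by
  rw [tokenAdj_struct] at h
  obtain ⟨a, b, hab, haP, haQ, hbQ, hbP, hd⟩ := h
  have hPQ : P.1 \ Q.1 = {a} := by
    ext z
    simp only [mem_sdiff, mem_singleton]
    constructor
    · rintro ⟨h1, h2⟩
      have hz : z ∈ symmDiff P.1 Q.1 := Finset.mem_symmDiff.mpr (Or.inl ⟨h1, h2⟩)
      rw [hd] at hz
      simp only [mem_insert, mem_singleton] at hz
      rcases hz with h | h
      · exact h
      · exact absurd (h ▸ h1) hbP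
    · rintro rfl
      exact ⟨haP, haQ⟩
  have hQP : Q.1 \ P.1 = {b} := by
    ext z
    simp only [mem_sdiff, mem_singleton]
    constructor
    · rintro ⟨h1, h2⟩
      have hz : z ∈ symmDiff P.1 Q.1 := Finset.mem_symmDiff.mpr (Or.inr ⟨h1, h2⟩)
      rw [hd] at hz
      simp only [mem_insert, mem_singleton] at hz
      rcases hz with h | h
      · exact absurd (h ▸ h1) haQ
      · exact h
    · rintro rfl
      exact ⟨hbQ, hbP⟩
  have herase : P.1.erase a = Q.1.erase b := by
    ext z
    simp only [mem_erase]
    constructor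
    · rintro ⟨hza, hzP⟩
      have hzQ : z ∈ Q.1 := by
        by_contra hc
        have : z ∈ P.1 \ Q.1 := mem_sdiff.mpr ⟨hzP, hc⟩
        rw [hPQ] at this
        exact hza (mem_singleton.mp this)
      exact ⟨fun h => hbP (h ▸ hzP), hzQ⟩
    · rintro ⟨hzb, hzQ⟩
      have hzP : z ∈ P.1 := by
        by_contra hc
        have : z ∈ Q.1 \ P.1 := mem_sdiff.mpr ⟨hzQ, hc⟩
        rw [hQP] at this
        exact hzb (mem_singleton.mp this)
      exact ⟨fun h => haQ (h ▸ hzQ), hzP⟩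
  show (∏ x ∈ P.1 \ Q.1, ∏ y ∈ Q.1 \ P.1, Γ.sign x y) = _
  rw [hPQ, hQP, Finset.prod_singleton, Finset.prod_singleton, hs a b hab]
  rw [← Finset.mul_prod_erase _ _ haP, ← Finset.mul_prod_erase _ _ hbQ, herase,
    mul_mul_mul_comm, Int.units_mul_self, mul_one]

lemma signed_lap_eq {Γ : SignedGraph V} (s : V → ℤˣ)
    (hs : ∀ u v, Γ.G.Adj u v → Γ.sign u v = s u * s v) (k : ℕ) :
    (Γ.token k).lapMatrix
      = Matrix.diagonal (prodSign s k) * (tokenAdj Γ.G k).lapMatrix ℝ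
          * Matrix.diagonal (prodSign s k) := by
  classical
  ext P Q
  simp only [Matrix.mul_diagonal, Matrix.diagonal_mul, SignedGraph.lapMatrix,
    SignedGraph.adjMatrix, SimpleGraph.lapMatrix, SimpleGraph.degMatrix, Matrix.sub_apply,
    Matrix.diagonal_apply, Matrix.of_apply, SimpleGraph.adjMatrix_apply]
  by_cases hPQ : P = Q
  · subst hPQ
    have hirr : ¬ (Γ.token k).G.Adj P P := SimpleGraph.irrefl _
    have hirr2 : ¬ (tokenAdj Γ.G k).Adj P P := SimpleGraph.irrefl _
    simp only [if_pos rfl, hirr, hirr2, if_false, sub_zero, eq_self_iff_true, if_true]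
    have hd := prodSign_mul_self s k P
    have hdeg : (Γ.token k).G.degree P = (tokenAdj Γ.G k).degree P := rfl
    rw [hdeg]
    linear_combination (-((tokenAdj Γ.G k).degree P : ℝ)) * hd
  · by_cases hadj : (tokenAdj Γ.G k).Adj P Q
    · have hadj' : (Γ.token k).G.Adj P Q := hadj
      simp only [hPQ, if_false, hadj, hadj', if_true, zero_sub]
      have := token_sign_singletons hadj s hs
      rw [this]
      unfold prodSign
      push_cast
      ring
    · have hadj' : ¬ (Γ.token k).G.Adj P Q := hadj
      simp only [hPQ, if_false, hadj, hadj', sub_zero, mul_zero, zero_mul]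

end TokenAux




end SignedGraph

/-- for a balanced signed graph and `1 ≤ k₁ < k₂ < n` there is a signed
binomial matrix `B = S_{k₂} B⁺ S_{k₁}` with `B L_{k₁} = L_{k₂} B`. -/
theorem signed_binomial_commutes_general {V : Type*} [Fintype V] [DecidableEq V]
    (n k₁ k₂ : ℕ) (hn : Fintype.card V = n) (hk1 : 1 ≤ k₁) (hk12 : k₁ < k₂) (hk2 : k₂ < n)
    (Γ : SignedGraph V) (hbal : Γ.Balanced) :
    ∃ (s₁ : {A : Finset V // A.card = k₁} → ℝ) (s₂ : {A : Finset V // A.card = k₂} → ℝ),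
      (∀ A, s₁ A = 1 ∨ s₁ A = -1) ∧ (∀ A, s₂ A = 1 ∨ s₂ A = -1) ∧
      Matrix.diagonal s₂ * binomB2 V k₁ k₂ * Matrix.diagonal s₁ * (Γ.token k₁).lapMatrix
        = (Γ.token k₂).lapMatrix *
            (Matrix.diagonal s₂ * binomB2 V k₁ k₂ * Matrix.diagonal s₁) := by
  classical
  obtain ⟨s, hs⟩ := SignedGraph.exists_switch hbal
  refine ⟨SignedGraph.prodSign s k₁, SignedGraph.prodSign s k₂, ?_, ?_, ?_⟩
  · intro A
    rcases Int.units_eq_one_or (∏ v ∈ A.1, s v) with h | h <;>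
      simp [SignedGraph.prodSign, h]
  · intro A
    rcases Int.units_eq_one_or (∏ v ∈ A.1, s v) with h | h <;>
      simp [SignedGraph.prodSign, h]
  · rw [SignedGraph.signed_lap_eq s hs k₁, SignedGraph.signed_lap_eq s hs k₂]
    have h1 : Matrix.diagonal (SignedGraph.prodSign s k₁)
        * Matrix.diagonal (SignedGraph.prodSign s k₁) = 1 := by
      rw [Matrix.diagonal_mul_diagonal]
      have : (fun P => SignedGraph.prodSign s k₁ P * SignedGraph.prodSign s k₁ P)
          = fun _ => (1 : ℝ) := funext fun P => SignedGraph.prodSign_mul_self s k₁ P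
      rw [this]
      exact Matrix.diagonal_one
    have h2 : Matrix.diagonal (SignedGraph.prodSign s k₂)
        * Matrix.diagonal (SignedGraph.prodSign s k₂) = 1 := by
      rw [Matrix.diagonal_mul_diagonal]
      have : (fun P => SignedGraph.prodSign s k₂ P * SignedGraph.prodSign s k₂ P)
          = fun _ => (1 : ℝ) := funext fun P => SignedGraph.prodSign_mul_self s k₂ P
      rw [this]
      exact Matrix.diagonal_one
    have hcomm := SignedGraph.token_lap_commutes (V := V) Γ.G k₁ k₂
    simp only [Matrix.mul_assoc]
    rw [← Matrix.mul_assoc (Matrix.diagonal (SignedGraph.prodSign s k₁))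
      (Matrix.diagonal (SignedGraph.prodSign s k₁)), h1, Matrix.one_mul]
    rw [← Matrix.mul_assoc (Matrix.diagonal (SignedGraph.prodSign s k₂))
      (Matrix.diagonal (SignedGraph.prodSign s k₂)), h2, Matrix.one_mul]
    congr 1
    rw [← Matrix.mul_assoc, hcomm, Matrix.mul_assoc]
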